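/- Let G be a Gröbner basis for a homogeneous ideal I ⊆ S = k[x_0,...,x_r] with respect to an elimination order τ for x_0. Then G_p = {incoef_{x_0}(g) : g ∈ G, deg_{x_0}(g) ≤ p} is a Gröbner basis for the p-th partial elimination ideal K_p(I) with respect to the induced order τ_0 on k[x_1,...,x_r]. -/

import Mathlib

open MvPolynomial

/-- A finite graded free resolution of a (homogeneous) ideal `I` in a polynomial ring. -/
structure GradedFreeRes {k : Type*} [Field k] {N : ℕ}
    (I : Ideal (MvPolynomial (Fin N) k)) where
  rk : ℕ → ℕ
  shift : (i : ℕ) → Fin (rk i) → ℕ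
  len : ℕ
  rk_eq_zero : ∀ i, len < i → rk i = 0
  gen : Fin (rk 0) → MvPolynomial (Fin N) k
  gen_hom : ∀ j, (gen j).IsHomogeneous (shift 0 j)
  mat : (i : ℕ) → Matrix (Fin (rk i)) (Fin (rk (i + 1))) (MvPolynomial (Fin N) k)
  mat_hom : ∀ i a b, mat i a b = 0 ∨
    (shift i a ≤ shift (i + 1) b ∧ (mat i a b).IsHomogeneous (shift (i + 1) b - shift i a))
  aug_surj : LinearMap.range
    (Fintype.linearCombination (MvPolynomial (Fin N) k) gen) = I
  aug_exact : LinearMap.range (mat 0).mulVecLin =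
    LinearMap.ker
      (Fintype.linearCombination (MvPolynomial (Fin N) k) gen)
  complex_exact : ∀ i,
    LinearMap.range (mat (i + 1)).mulVecLin = LinearMap.ker (mat i).mulVecLin

/-- The Castelnuovo–Mumford regularity of a homogeneous ideal, defined as the minimum over
all finite graded free resolutions of `I` of the maximum of `shift i j - i`. -/
noncomputable def cmReg {k : Type*} [Field k] {N : ℕ}
    (I : Ideal (MvPolynomial (Fin N) k)) : ℕ :=
  sInf { d | ∃ R : GradedFreeRes I, ∀ i, ∀ j : Fin (R.rk i), R.shift i j ≤ d + i }

/-- The leading exponent (degree) of a polynomial with respect to a monomial order. -/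
noncomputable def ldeg {k : Type*} [Field k] {N : ℕ} (τ : MonomialOrder (Fin N))
    (f : MvPolynomial (Fin N) k) : Fin N →₀ ℕ :=
  τ.toSyn.symm (f.support.sup fun m => τ.toSyn m)

/-- The initial ideal of `I` with respect to a monomial order `τ`. -/
noncomputable def initialIdeal {k : Type*} [Field k] {N : ℕ} (τ : MonomialOrder (Fin N))
    (I : Ideal (MvPolynomial (Fin N) k)) : Ideal (MvPolynomial (Fin N) k) :=
  Ideal.span { q | ∃ f ∈ I, f ≠ 0 ∧ q = monomial (ldeg τ f) (1 : k) }

/-- A homogeneous ideal: one containing all homogeneous components of its elements. -/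
def IsHomogeneousIdeal {k : Type*} [Field k] {N : ℕ}
    (I : Ideal (MvPolynomial (Fin N) k)) : Prop :=
  ∀ f ∈ I, ∀ d : ℕ, homogeneousComponent d f ∈ I

/-- The `p`-th partial elimination ideal (as a set): leading coefficients with respect to the
variable `x₀` of the elements of `I` of `x₀`-degree `p`, together with `0`. -/
noncomputable def pelimSet {k : Type*} [Field k] {N : ℕ}
    (I : Ideal (MvPolynomial (Fin (N + 1)) k)) (p : ℕ) :
    Set (MvPolynomial (Fin N) k) :=
  insert 0 { h | ∃ f ∈ I, f ≠ 0 ∧ (finSuccEquiv k N f).natDegree = p ∧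
    (finSuccEquiv k N f).leadingCoeff = h }

/-- An elimination order for the first variable: any monomial involving `x₀` is larger than
any monomial not involving `x₀`. -/
def IsElimOrder {N : ℕ} (τ : MonomialOrder (Fin (N + 1))) : Prop :=
  ∀ a b : Fin (N + 1) →₀ ℕ, a 0 = 0 → b 0 ≠ 0 → τ.toSyn a < τ.toSyn b

/-- `τ₀` is the restriction of `τ` to the last `N` variables. -/
def InducedOrder {N : ℕ} (τ : MonomialOrder (Fin (N + 1))) (τ₀ : MonomialOrder (Fin N)) : Prop :=
  ∀ a b : Fin N →₀ ℕ,
    τ₀.toSyn a ≤ τ₀.toSyn b ↔ τ.toSyn (a.mapDomain Fin.succ) ≤ τ.toSyn (b.mapDomain Fin.succ)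

/-- The linear change of coordinates on a polynomial ring given by a matrix. -/
noncomputable def coordChange {k : Type*} [Field k] {N : ℕ}
    (g : Matrix (Fin N) (Fin N) k) :
    MvPolynomial (Fin N) k →ₐ[k] MvPolynomial (Fin N) k :=
  aeval fun i => ∑ j, C (g i j) * X j

/-- `J` is the generic initial ideal of `I` with respect to `τ`: for every change of
coordinates `g` in a nonempty Zariski-open subset of `GL_N`, the initial ideal of `g · I`
is `J`. -/
noncomputable def IsGin {k : Type*} [Field k] {N : ℕ} (τ : MonomialOrder (Fin N))
    (I J : Ideal (MvPolynomial (Fin N) k)) : Prop :=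
  ∃ P : MvPolynomial (Fin N × Fin N) k, P ≠ 0 ∧
    ∀ g : Matrix (Fin N) (Fin N) k, IsUnit g.det →
      eval (fun q => g q.1 q.2) P ≠ 0 →
        initialIdeal τ (Ideal.map (coordChange g).toRingHom I) = J

/-- `G` is a Gröbner basis of `I` with respect to `τ`: a set of nonzero elements of `I` whose
leading monomials generate the initial ideal of `I`. -/
def IsGroebnerBasis {k : Type*} [Field k] {N : ℕ} (τ : MonomialOrder (Fin N))
    (I : Ideal (MvPolynomial (Fin N) k)) (G : Set (MvPolynomial (Fin N) k)) : Prop :=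
  (0 : MvPolynomial (Fin N) k) ∉ G ∧ G ⊆ (I : Set (MvPolynomial (Fin N) k)) ∧
    initialIdeal τ I = Ideal.span ((fun g => monomial (ldeg τ g) (1 : k)) '' G)

section Stmt5Aux

variable {k : Type*} [Field k] {N : ℕ}

private lemma zero_not_range_succ : (0 : Fin (N + 1)) ∉ Set.range Fin.succ := by
  rintro ⟨x, hx⟩; exact Fin.succ_ne_zero x hx

private lemma cons_eq_single_add (i : ℕ) (m : Fin N →₀ ℕ) :
    Finsupp.cons i m = Finsupp.single (0 : Fin (N + 1)) i + Finsupp.mapDomain Fin.succ m := by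
  ext a
  refine Fin.cases ?_ (fun j => ?_) a
  · simp [Finsupp.mapDomain_notin_range _ _ zero_not_range_succ]
  · simp [Finsupp.mapDomain_apply (Fin.succ_injective N),
      Finsupp.single_apply, (Fin.succ_ne_zero j).symm]

/-- A weak elimination order is automatically a strong one: larger `x₀`-degree wins. -/
private lemma strong_elim (τ : MonomialOrder (Fin (N + 1))) (helim : IsElimOrder τ)
    {a b : Fin (N + 1) →₀ ℕ} (h : a 0 < b 0) : τ.toSyn a < τ.toSyn b := by
  have key : τ.toSyn (Finsupp.mapDomain Fin.succ a.tail)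
      < τ.toSyn (Finsupp.single (0 : Fin (N + 1)) (b 0 - a 0)
          + Finsupp.mapDomain Fin.succ b.tail) := by
    refine helim _ _ ?_ ?_
    · exact Finsupp.mapDomain_notin_range _ _ zero_not_range_succ
    · have : (Finsupp.mapDomain Fin.succ b.tail) 0 = 0 :=
        Finsupp.mapDomain_notin_range _ _ zero_not_range_succ
      simp only [Finsupp.add_apply, this, Finsupp.single_eq_same, add_zero]
      omega
  have ha : a = Finsupp.single (0 : Fin (N + 1)) (a 0) + Finsupp.mapDomain Fin.succ a.tail := by
    rw [← cons_eq_single_add, Finsupp.cons_tail]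
  have hb : b = Finsupp.single (0 : Fin (N + 1)) (a 0)
      + (Finsupp.single (0 : Fin (N + 1)) (b 0 - a 0) + Finsupp.mapDomain Fin.succ b.tail) := by
    rw [← add_assoc, ← Finsupp.single_add, Nat.add_sub_cancel' h.le, ← cons_eq_single_add,
      Finsupp.cons_tail]
  rw [ha, hb, map_add, map_add]
  exact (add_lt_add_iff_left _).2 key

private lemma ldeg_mem_support {n : ℕ} (τ : MonomialOrder (Fin n))
    (f : MvPolynomial (Fin n) k) (hf : f ≠ 0) : ldeg τ f ∈ f.support := by
  obtain ⟨b, hb, he⟩ := Finset.exists_mem_eq_sup f.support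
    (MvPolynomial.support_nonempty.2 hf) (fun m => τ.toSyn m)
  unfold ldeg
  rw [he, AddEquiv.symm_apply_apply]
  exact hb

private lemma le_ldeg {n : ℕ} (τ : MonomialOrder (Fin n)) (f : MvPolynomial (Fin n) k)
    {a : Fin n →₀ ℕ} (ha : a ∈ f.support) : τ.toSyn a ≤ τ.toSyn (ldeg τ f) := by
  unfold ldeg
  rw [AddEquiv.apply_symm_apply]
  exact Finset.le_sup ha

/-- The key structural lemma: for an elimination order, the leading exponent of `f`
decomposes as the `x₀`-degree of `f` together with the leading exponent of its
leading coefficient with respect to the induced order. -/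
private lemma ldeg_eq_cons (τ : MonomialOrder (Fin (N + 1))) (τ₀ : MonomialOrder (Fin N))
    (helim : IsElimOrder τ) (hind : InducedOrder τ τ₀)
    (f : MvPolynomial (Fin (N + 1)) k) (hf : f ≠ 0) :
    ldeg τ f = Finsupp.cons (finSuccEquiv k N f).natDegree
      (ldeg τ₀ (finSuccEquiv k N f).leadingCoeff) := by
  set P := finSuccEquiv k N f with hPdef
  have hP : P ≠ 0 := by
    simpa [hPdef] using (map_ne_zero_iff _ (AlgEquiv.injective (finSuccEquiv k N))).2 hf
  have hlc : P.leadingCoeff ≠ 0 := Polynomial.leadingCoeff_ne_zero.2 hP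
  set d := P.natDegree with hddef
  set L := ldeg τ₀ P.leadingCoeff with hLdef
  have hmem : Finsupp.cons d L ∈ f.support := by
    rw [MvPolynomial.mem_support_iff, ← MvPolynomial.finSuccEquiv_coeff_coeff, ← hPdef,
      Polynomial.coeff_natDegree]
    exact MvPolynomial.mem_support_iff.1 (ldeg_mem_support τ₀ _ hlc)
  have hmax : ∀ a ∈ f.support, τ.toSyn a ≤ τ.toSyn (Finsupp.cons d L) := by
    intro a ha
    have hca : MvPolynomial.coeff a.tail (P.coeff (a 0)) ≠ 0 := by
      rw [hPdef, MvPolynomial.finSuccEquiv_coeff_coeff, Finsupp.cons_tail]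
      exact MvPolynomial.mem_support_iff.1 ha
    have hcoeff : P.coeff (a 0) ≠ 0 := fun h => hca (by simp [h])
    have ha0 : a 0 ≤ d := Polynomial.le_natDegree_of_ne_zero hcoeff
    rcases lt_or_eq_of_le ha0 with hlt | heq
    · exact (strong_elim τ helim (by rwa [Finsupp.cons_zero])).le
    · have htail : τ₀.toSyn a.tail ≤ τ₀.toSyn L := by
        apply le_ldeg
        rw [MvPolynomial.mem_support_iff, ← Polynomial.coeff_natDegree, ← hddef, ← heq]
        exact hca
      have hsucc := (hind a.tail L).1 htail
      have ha' : a = Finsupp.single (0 : Fin (N + 1)) d + Finsupp.mapDomain Fin.succ a.tail := by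
        rw [← cons_eq_single_add, ← heq, Finsupp.cons_tail]
      rw [ha', cons_eq_single_add, map_add, map_add]
      exact (add_le_add_iff_left _).2 hsucc
  refine τ.toSyn.injective (le_antisymm ?_ ?_)
  · exact hmax _ (ldeg_mem_support τ f hf)
  · exact le_ldeg τ f hmem

private lemma coeff_mem_pelim (I : Ideal (MvPolynomial (Fin (N + 1)) k)) (p : ℕ)
    {f : MvPolynomial (Fin (N + 1)) k} (hfI : f ∈ I)
    (h : ((finSuccEquiv k N f)).coeff p ≠ 0)
    (hd : (finSuccEquiv k N f).natDegree ≤ p) :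
    (finSuccEquiv k N f).coeff p ∈ pelimSet I p := by
  have hdp : (finSuccEquiv k N f).natDegree = p :=
    le_antisymm hd (Polynomial.le_natDegree_of_ne_zero h)
  have hf0 : f ≠ 0 := by
    intro hf0
    apply h
    rw [hf0, map_zero, Polynomial.coeff_zero]
  exact Set.mem_insert_of_mem _
    ⟨f, hfI, hf0, hdp, by rw [Polynomial.leadingCoeff, hdp]⟩

/-- The partial elimination set is already an ideal. -/
private def pelimIdeal (I : Ideal (MvPolynomial (Fin (N + 1)) k)) (p : ℕ) :
    Ideal (MvPolynomial (Fin N) k) where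
  carrier := pelimSet I p
  zero_mem' := Set.mem_insert _ _
  add_mem' := by
    intro a b ha hb
    rcases Set.mem_insert_iff.1 ha with rfl | ⟨f, hfI, hf0, hfd, rfl⟩
    · simpa using hb
    rcases Set.mem_insert_iff.1 hb with rfl | ⟨g, hgI, hg0, hgd, rfl⟩
    · rw [add_zero]
      exact Set.mem_insert_of_mem _ ⟨f, hfI, hf0, hfd, rfl⟩
    by_cases hsum : (finSuccEquiv k N f).leadingCoeff + (finSuccEquiv k N g).leadingCoeff = 0
    · rw [hsum]; exact Set.mem_insert _ _
    have hc : (finSuccEquiv k N (f + g)).coeff p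
        = (finSuccEquiv k N f).leadingCoeff + (finSuccEquiv k N g).leadingCoeff := by
      rw [map_add, Polynomial.coeff_add, Polynomial.leadingCoeff, Polynomial.leadingCoeff,
        hfd, hgd]
    have := coeff_mem_pelim I p (I.add_mem hfI hgI) (by rw [hc]; exact hsum)
      (by
        rw [map_add]
        exact le_trans (Polynomial.natDegree_add_le _ _) (by rw [hfd, hgd]; simp))
    rwa [hc] at this
  smul_mem' := by
    intro c q hq
    rcases Set.mem_insert_iff.1 hq with rfl | ⟨f, hfI, hf0, hfd, rfl⟩
    · rw [smul_eq_mul, mul_zero]; exact Set.mem_insert _ _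
    rw [smul_eq_mul]
    by_cases hc0 : c * (finSuccEquiv k N f).leadingCoeff = 0
    · rw [hc0]; exact Set.mem_insert _ _
    set f' := (finSuccEquiv k N).symm (Polynomial.C c) * f with hf'def
    have hφ : finSuccEquiv k N f' = Polynomial.C c * finSuccEquiv k N f := by
      rw [hf'def, map_mul, AlgEquiv.apply_symm_apply]
    have hc : (finSuccEquiv k N f').coeff p = c * (finSuccEquiv k N f).leadingCoeff := by
      rw [hφ, Polynomial.coeff_C_mul, Polynomial.leadingCoeff, hfd]
    have := coeff_mem_pelim I p (I.mul_mem_left _ hfI) (by rw [hc]; exact hc0)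
      (by
        rw [hφ]
        exact le_trans (Polynomial.natDegree_C_mul_le _ _) (le_of_eq hfd))
    rwa [hc] at this

private lemma span_pelim (I : Ideal (MvPolynomial (Fin (N + 1)) k)) (p : ℕ) :
    Ideal.span (pelimSet I p) = pelimIdeal I p := by
  have h : (pelimIdeal I p : Set (MvPolynomial (Fin N) k)) = pelimSet I p := rfl
  rw [← h, Ideal.span_eq]

/-- The leading coefficient of any `g ∈ I` of `x₀`-degree at most `p` lies in `K_p(I)`. -/
private lemma lc_mem_pelim (I : Ideal (MvPolynomial (Fin (N + 1)) k)) (p : ℕ)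
    {g : MvPolynomial (Fin (N + 1)) k} (hgI : g ∈ I) (hg0 : g ≠ 0)
    (hgd : (finSuccEquiv k N g).natDegree ≤ p) :
    (finSuccEquiv k N g).leadingCoeff ∈ pelimSet I p := by
  set P := finSuccEquiv k N g with hPdef
  have hP : P ≠ 0 := by
    simpa [hPdef] using (map_ne_zero_iff _ (AlgEquiv.injective (finSuccEquiv k N))).2 hg0
  set f' := (finSuccEquiv k N).symm (Polynomial.X ^ (p - P.natDegree)) * g with hf'def
  have hφ : finSuccEquiv k N f' = Polynomial.X ^ (p - P.natDegree) * P := by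
    rw [hf'def, map_mul, AlgEquiv.apply_symm_apply, hPdef]
  have hc : (finSuccEquiv k N f').coeff p = P.leadingCoeff := by
    have h2 := Polynomial.coeff_X_pow_mul P (p - P.natDegree) P.natDegree
    rw [Nat.add_sub_cancel' hgd] at h2
    rw [hφ, h2, Polynomial.coeff_natDegree]
  have := coeff_mem_pelim I p (I.mul_mem_left _ hgI)
    (by rw [hc]; exact Polynomial.leadingCoeff_ne_zero.2 hP)
    (by
      rw [hφ]
      refine le_trans (Polynomial.natDegree_mul_le) ?_
      rw [Polynomial.natDegree_X_pow]
      omega)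
  rwa [hc] at this

end Stmt5Aux

/-- If `G` is a Gröbner basis of a homogeneous ideal `I` with respect to an elimination order
`τ` for `x₀`, then `G_p = { incoef(g) : g ∈ G, deg_{x₀}(g) ≤ p }` is a Gröbner basis of the
`p`-th partial elimination ideal `K_p(I)` with respect to the induced order `τ₀`. -/
theorem stmt5 {k : Type*} [Field k] {N : ℕ} (τ : MonomialOrder (Fin (N + 1)))
    (τ₀ : MonomialOrder (Fin N)) (helim : IsElimOrder τ) (hind : InducedOrder τ τ₀)
    (I : Ideal (MvPolynomial (Fin (N + 1)) k)) (hI : IsHomogeneousIdeal I)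
    (G : Set (MvPolynomial (Fin (N + 1)) k)) (hG : IsGroebnerBasis τ I G) (p : ℕ) :
    IsGroebnerBasis τ₀ (Ideal.span (pelimSet I p))
      { h | ∃ g ∈ G, (finSuccEquiv k N g).natDegree ≤ p ∧
        (finSuccEquiv k N g).leadingCoeff = h } := by
  classical
  have gne : ∀ g ∈ G, g ≠ 0 := fun g hg h0 => hG.1 (h0 ▸ hg)
  refine ⟨?_, ?_, ?_⟩
  · rintro ⟨g, hgG, _, hglc⟩
    have hg0 : finSuccEquiv k N g = 0 := Polynomial.leadingCoeff_eq_zero.1 hglc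
    exact gne g hgG ((map_eq_zero_iff _ (AlgEquiv.injective _)).1 hg0)
  · rintro q ⟨g, hgG, hgd, rfl⟩
    exact Ideal.subset_span (lc_mem_pelim I p (hG.2.1 hgG) (gne g hgG) hgd)
  · apply le_antisymm
    · rw [initialIdeal]
      apply Ideal.span_le.2
      rintro _ ⟨q, hq, hq0, rfl⟩
      rw [span_pelim] at hq
      obtain (rfl | ⟨f, hfI, hf0, hfd, hflc⟩) := hq
      · exact absurd rfl hq0
      have hfld : ldeg τ f = Finsupp.cons p (ldeg τ₀ q) := by
        rw [ldeg_eq_cons τ τ₀ helim hind f hf0, hfd, hflc]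
      have h1 : monomial (ldeg τ f) (1 : k) ∈ initialIdeal τ I := by
        rw [initialIdeal]
        exact Ideal.subset_span ⟨f, hfI, hf0, rfl⟩
      have himg : ((fun g => monomial (ldeg τ g) (1 : k)) '' G)
          = (fun s => monomial s (1 : k)) '' ((ldeg τ) '' G) := by
        rw [Set.image_image]
      rw [hG.2.2, himg, mem_ideal_span_monomial_image] at h1
      obtain ⟨s, ⟨g, hgG, rfl⟩, hle⟩ := h1 (ldeg τ f) (by simp [support_monomial])
      have hg0 : g ≠ 0 := gne g hgG
      rw [ldeg_eq_cons τ τ₀ helim hind g hg0, hfld, Finsupp.le_def] at hle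
      have hd : (finSuccEquiv k N g).natDegree ≤ p := by
        simpa [Finsupp.cons_zero] using hle 0
      have hLle : ldeg τ₀ (finSuccEquiv k N g).leadingCoeff ≤ ldeg τ₀ q :=
        Finsupp.le_def.2 fun j => by simpa [Finsupp.cons_succ] using hle j.succ
      have hfact : monomial (ldeg τ₀ q) (1 : k)
          = monomial (ldeg τ₀ q - ldeg τ₀ (finSuccEquiv k N g).leadingCoeff) 1
            * monomial (ldeg τ₀ (finSuccEquiv k N g).leadingCoeff) 1 := by
        rw [monomial_mul, one_mul, tsub_add_cancel_of_le hLle]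
      rw [hfact]
      exact Ideal.mul_mem_left _ _
        (Ideal.subset_span ⟨(finSuccEquiv k N g).leadingCoeff, ⟨g, hgG, hd, rfl⟩, rfl⟩)
    · apply Ideal.span_le.2
      rintro _ ⟨q, ⟨g, hgG, hgd, rfl⟩, rfl⟩
      have hg0 : g ≠ 0 := gne g hgG
      have hlc0 : (finSuccEquiv k N g).leadingCoeff ≠ 0 :=
        Polynomial.leadingCoeff_ne_zero.2
          ((map_ne_zero_iff _ (AlgEquiv.injective _)).2 hg0)
      rw [initialIdeal]
      exact Ideal.subset_span
        ⟨(finSuccEquiv k N g).leadingCoeff,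
          Ideal.subset_span (lc_mem_pelim I p (hG.2.1 hgG) hg0 hgd), hlc0, rfl⟩
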